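/- Let w be an element of the free group on x1,...,xn whose exponent sums of x_i and x_j are both zero. Then the coefficient of h_i h_j in the Magnus expansion of any cyclic permutation (conjugate) of w equals the coefficient of h_i h_j in the Magnus expansion of w. -/

import Mathlib

/-- The degree `≤ 2` truncation of the ring of formal power series in the
noncommuting variables `h 0, ..., h (n-1)` over `ℤ`: `c0` is the constant
coefficient, `c1 i` the coefficient of `h i`, and `c2 i j` the coefficient of
the monomial `h i * h j`. -/
structure Trunc2 (n : ℕ) where
  c0 : ℤ
  c1 : Fin n → ℤ
  c2 : Fin n → Fin n → ℤ

namespace Trunc2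

variable {n : ℕ}

@[ext] theorem ext {a b : Trunc2 n} (h0 : a.c0 = b.c0) (h1 : ∀ i, a.c1 i = b.c1 i)
    (h2 : ∀ i j, a.c2 i j = b.c2 i j) : a = b := by
  cases a; cases b
  simp only [mk.injEq]
  exact ⟨h0, funext h1, funext fun i => funext (h2 i)⟩

instance : One (Trunc2 n) := ⟨⟨1, 0, 0⟩⟩

/-- Multiplication of truncated noncommutative power series. -/
instance : Mul (Trunc2 n) :=
  ⟨fun a b => ⟨a.c0 * b.c0,
    fun i => a.c0 * b.c1 i + b.c0 * a.c1 i,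
    fun i j => a.c0 * b.c2 i j + b.c0 * a.c2 i j + a.c1 i * b.c1 j⟩⟩

@[simp] theorem one_c0 : (1 : Trunc2 n).c0 = 1 := rfl
@[simp] theorem one_c1 (i : Fin n) : (1 : Trunc2 n).c1 i = 0 := rfl
@[simp] theorem one_c2 (i j : Fin n) : (1 : Trunc2 n).c2 i j = 0 := rfl
@[simp] theorem mul_c0 (a b : Trunc2 n) : (a * b).c0 = a.c0 * b.c0 := rfl
@[simp] theorem mul_c1 (a b : Trunc2 n) (i : Fin n) :
    (a * b).c1 i = a.c0 * b.c1 i + b.c0 * a.c1 i := rfl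
@[simp] theorem mul_c2 (a b : Trunc2 n) (i j : Fin n) :
    (a * b).c2 i j = a.c0 * b.c2 i j + b.c0 * a.c2 i j + a.c1 i * b.c1 j := rfl

instance : Monoid (Trunc2 n) where
  mul_assoc a b c := by ext <;> simp <;> ring
  one_mul a := by ext <;> simp
  mul_one a := by ext <;> simp

/-- The (truncated) Magnus image `1 + h k` of the generator `x k`, together with
its inverse `1 - h k + h k * h k`. -/
def gen (k : Fin n) : (Trunc2 n)ˣ where
  val := ⟨1, (Pi.single k 1 : Fin n → ℤ), 0⟩
  inv := ⟨1, -(Pi.single k 1 : Fin n → ℤ),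
    fun i j => (Pi.single k 1 : Fin n → ℤ) i * (Pi.single k 1 : Fin n → ℤ) j⟩
  val_inv := by ext <;> simp
  inv_val := by ext <;> simp

/-- The Magnus expansion (truncated in degree `≤ 2`): the homomorphism from the
free group on `x 0, ..., x (n-1)` determined by `x k ↦ 1 + h k`
(so `(x k)⁻¹ ↦ 1 - h k + h k ^ 2 - ⋯`). -/
noncomputable def magnus : FreeGroup (Fin n) →* (Trunc2 n)ˣ := FreeGroup.lift gen

/-- The coefficient of `h i` in the Magnus expansion of `w`. -/
noncomputable def magnusCoeff1 (i : Fin n) (w : FreeGroup (Fin n)) : ℤ :=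
  ((magnus w : (Trunc2 n)ˣ) : Trunc2 n).c1 i

/-- The coefficient of the monomial `h i * h j` in the Magnus expansion of `w`. -/
noncomputable def magnusCoeff2 (i j : Fin n) (w : FreeGroup (Fin n)) : ℤ :=
  ((magnus w : (Trunc2 n)ˣ) : Trunc2 n).c2 i j

end Trunc2

open Trunc2 FreeGroup

/-- The exponent sum of the generator `x i` in a word of the free group,
i.e. the `i`-th coordinate of the image of the word under the abelianization
map to `ℤ^n`. -/
noncomputable def expSum {n : ℕ} (i : Fin n) : FreeGroup (Fin n) →* Multiplicative ℤ :=
  FreeGroup.lift (fun j => Multiplicative.ofAdd (if j = i then (1 : ℤ) else 0))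


section Aux
variable {n : ℕ}

lemma pure_eq_of (k : Fin n) : (pure k : FreeGroup (Fin n)) = FreeGroup.of k := rfl

lemma magnus_of (k : Fin n) : magnus (FreeGroup.of k) = gen k := FreeGroup.lift_apply_of

lemma magnus_c0 (w : FreeGroup (Fin n)) :
    ((magnus w : (Trunc2 n)ˣ) : Trunc2 n).c0 = 1 := by
  induction w using FreeGroup.induction_on with
  | C1 => simp
  | of k => rw [magnus_of]; rfl
  | inv_of k ih => rw [_root_.map_inv, magnus_of]; rfl
  | mul x y ihx ihy => rw [_root_.map_mul, Units.val_mul, mul_c0, ihx, ihy, mul_one]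

lemma magnus_c1 (i : Fin n) (w : FreeGroup (Fin n)) :
    ((magnus w : (Trunc2 n)ˣ) : Trunc2 n).c1 i = Multiplicative.toAdd (expSum i w) := by
  induction w using FreeGroup.induction_on with
  | C1 => simp [expSum]
  | of k =>
      rw [magnus_of, expSum, FreeGroup.lift_apply_of]
      show (Pi.single k 1 : Fin n → ℤ) i = _
      by_cases h : k = i <;> simp [h, Pi.single_apply]
  | inv_of k ih =>
      rw [_root_.map_inv, _root_.map_inv, toAdd_inv, ← ih, magnus_of]
      rfl
  | mul x y ihx ihy =>
      rw [_root_.map_mul, _root_.map_mul, Units.val_mul, mul_c1, magnus_c0, magnus_c0,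
        toAdd_mul, ihx, ihy, one_mul, one_mul, add_comm]

end Aux

/-- if the exponent sums of `x i` and `x j` in `w` both vanish,
then the coefficient of `h i * h j` in the Magnus expansion of any conjugate
(cyclic permutation) of `w` equals that of `w`. -/
theorem magnusCoeff2_conj_of_expSum_zero {n : ℕ} (i j : Fin n)
    (w : FreeGroup (Fin n))
    (hi : Multiplicative.toAdd (expSum i w) = 0)
    (hj : Multiplicative.toAdd (expSum j w) = 0)
    (g : FreeGroup (Fin n)) :
    magnusCoeff2 i j (g * w * g⁻¹) = magnusCoeff2 i j w := by
  have hG : ((magnus g : (Trunc2 n)ˣ) : Trunc2 n).c0 = 1 := magnus_c0 g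
  have hW : ((magnus w : (Trunc2 n)ˣ) : Trunc2 n).c0 = 1 := magnus_c0 w
  have hGi : ((magnus g⁻¹ : (Trunc2 n)ˣ) : Trunc2 n).c0 = 1 := magnus_c0 g⁻¹
  have hWi : ((magnus w : (Trunc2 n)ˣ) : Trunc2 n).c1 i = 0 := by
    rw [magnus_c1, hi]
  have hWj : ((magnus w : (Trunc2 n)ˣ) : Trunc2 n).c1 j = 0 := by
    rw [magnus_c1, hj]
  have hunit : ((magnus g : (Trunc2 n)ˣ) : Trunc2 n) * ((magnus g⁻¹ : (Trunc2 n)ˣ) : Trunc2 n)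
      = 1 := by
    rw [← Units.val_mul, ← _root_.map_mul]
    simp
  have h2 := congrArg (fun t => t.c2 i j) hunit
  have h1i := congrArg (fun t => t.c1 i) hunit
  simp only [mul_c2, mul_c1, one_c2, one_c1, hG, hGi, one_mul] at h2 h1i
  unfold magnusCoeff2
  simp only [_root_.map_mul, Units.val_mul, mul_c2, mul_c1, mul_c0, hG, hW, hGi, hWi, hWj, one_mul,
    mul_zero, zero_mul, add_zero, zero_add]
  linarith
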